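/- Let T be a J-unitary operator on K and let z be a complex number with |z| = 1. Then T − z·1 is a Fredholm operator on K if and only if V(z̄T) − 1 is a Fredholm operator on K. -/

import Mathlib

noncomputable section

open ContinuousLinearMap

variable {H : Type*} [NormedAddCommGroup H] [InnerProductSpace ℂ H] [CompleteSpace H]
  [TopologicalSpace.SeparableSpace H]

local notation "K" => WithLp 2 (H × H)

/-- The 2×2 block operator `[[a,b],[c,d]]` on `K = H ⊕ H`. -/
def blk (a b c d : H →L[ℂ] H) : K →L[ℂ] K :=
  (((WithLp.prodContinuousLinearEquiv 2 ℂ H H).symm : (H × H) →L[ℂ] K).comp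
      ((((a.comp (fst ℂ H H)) + (b.comp (snd ℂ H H))).prod
        ((c.comp (fst ℂ H H)) + (d.comp (snd ℂ H H)))))).comp
    ((WithLp.prodContinuousLinearEquiv 2 ℂ H H : K →L[ℂ] (H × H)))

/-- The fundamental symmetry `J = [[1,0],[0,-1]]`. -/
def fundJ : K →L[ℂ] K := blk 1 0 0 (-1)

/-- A bounded operator `T` on the Krein space `(K, J)` is `J`-unitary if it is invertible
and `T* J T = J`. -/
def IsJUnitary (T : K →L[ℂ] K) : Prop :=
  IsUnit T ∧ star T * fundJ * T = fundJ

/-- A bounded operator on a Hilbert space is Fredholm: finite-dimensional kernel,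
closed range, and finite-dimensional orthogonal complement of the range. -/
def IsFredholmOp (A : K →L[ℂ] K) : Prop :=
  FiniteDimensional ℂ (LinearMap.ker (A : K →ₗ[ℂ] K)) ∧ IsClosed (Set.range A : Set K) ∧
    FiniteDimensional ℂ ↥((LinearMap.range (A : K →ₗ[ℂ] K))ᗮ)

set_option linter.unusedSectionVars false
set_option maxHeartbeats 1000000

section BlkAlgebra

lemma blk_apply_fst (a b c d : H →L[ℂ] H) (x : K) :
    (blk a b c d x).ofLp.1 = a x.ofLp.1 + b x.ofLp.2 := rfl
lemma blk_apply_snd (a b c d : H →L[ℂ] H) (x : K) :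
    (blk a b c d x).ofLp.2 = c x.ofLp.1 + d x.ofLp.2 := rfl

lemma kext {f g : K →L[ℂ] K} (h1 : ∀ x : K, (f x).ofLp.1 = (g x).ofLp.1)
    (h2 : ∀ x : K, (f x).ofLp.2 = (g x).ofLp.2) : f = g := by
  ext x
  exact WithLp.ofLp_injective 2 (Prod.ext (h1 x) (h2 x))

lemma blk_mul (a b c d a' b' c' d' : H →L[ℂ] H) :
    blk a b c d * blk a' b' c' d' =
      blk (a * a' + b * c') (a * b' + b * d') (c * a' + d * c') (c * b' + d * d') := by
  refine kext (fun x => ?_) (fun x => ?_) <;>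
    simp [mul_apply, blk_apply_fst, blk_apply_snd, -WithLp.ofLp_fst, -WithLp.ofLp_snd] <;> abel

lemma blk_one : (1 : K →L[ℂ] K) = blk 1 0 0 1 := by
  refine kext (fun x => ?_) (fun x => ?_) <;> simp [blk_apply_fst, blk_apply_snd, one_apply, -WithLp.ofLp_fst, -WithLp.ofLp_snd]

lemma blk_add (a b c d a' b' c' d' : H →L[ℂ] H) :
    blk a b c d + blk a' b' c' d' = blk (a + a') (b + b') (c + c') (d + d') := by
  refine kext (fun x => ?_) (fun x => ?_) <;>
    simp [blk_apply_fst, blk_apply_snd, ContinuousLinearMap.add_apply, -WithLp.ofLp_fst, -WithLp.ofLp_snd] <;> abel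

lemma blk_neg (a b c d : H →L[ℂ] H) : -blk a b c d = blk (-a) (-b) (-c) (-d) := by
  refine kext (fun x => ?_) (fun x => ?_) <;>
    simp [blk_apply_fst, blk_apply_snd, ContinuousLinearMap.neg_apply, -WithLp.ofLp_fst, -WithLp.ofLp_snd] <;> abel

lemma blk_sub (a b c d a' b' c' d' : H →L[ℂ] H) :
    blk a b c d - blk a' b' c' d' = blk (a - a') (b - b') (c - c') (d - d') := by
  rw [sub_eq_add_neg, blk_neg, blk_add]; simp [sub_eq_add_neg]

lemma blk_smul (z : ℂ) (a b c d : H →L[ℂ] H) :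
    z • blk a b c d = blk (z • a) (z • b) (z • c) (z • d) := by
  refine kext (fun x => ?_) (fun x => ?_) <;>
    simp [blk_apply_fst, blk_apply_snd, coe_smul', Pi.smul_apply, smul_add, -WithLp.ofLp_fst, -WithLp.ofLp_snd]

lemma blk_inj {a b c d a' b' c' d' : H →L[ℂ] H}
    (h : blk a b c d = blk a' b' c' d') : a = a' ∧ b = b' ∧ c = c' ∧ d = d' := by
  have h1 : ∀ v : H, blk a b c d ((WithLp.equiv 2 (H × H)).symm (v, 0)) =
      blk a' b' c' d' ((WithLp.equiv 2 (H × H)).symm (v, 0)) := fun v => by rw [h]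
  have h2 : ∀ v : H, blk a b c d ((WithLp.equiv 2 (H × H)).symm (0, v)) =
      blk a' b' c' d' ((WithLp.equiv 2 (H × H)).symm (0, v)) := fun v => by rw [h]
  refine ⟨?_, ?_, ?_, ?_⟩ <;> ext v
  · have := congrArg (fun p : K => p.ofLp.1) (h1 v); simpa [blk_apply_fst, -WithLp.ofLp_fst, -WithLp.ofLp_snd] using this
  · have := congrArg (fun p : K => p.ofLp.1) (h2 v); simpa [blk_apply_fst, -WithLp.ofLp_fst, -WithLp.ofLp_snd] using this
  · have := congrArg (fun p : K => p.ofLp.2) (h1 v); simpa [blk_apply_snd, -WithLp.ofLp_fst, -WithLp.ofLp_snd] using this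
  · have := congrArg (fun p : K => p.ofLp.2) (h2 v); simpa [blk_apply_snd, -WithLp.ofLp_fst, -WithLp.ofLp_snd] using this

lemma blk_star (a b c d : H →L[ℂ] H) :
    star (blk a b c d) = blk (star a) (star c) (star b) (star d) := by
  have : blk (star a) (star c) (star b) (star d) = adjoint (blk a b c d) := by
    rw [eq_adjoint_iff]
    intro x y
    simp only [WithLp.prod_inner_apply, blk_apply_fst, blk_apply_snd, inner_add_left,
      inner_add_right, star_eq_adjoint, adjoint_inner_left]
    ring
  rw [star_eq_adjoint, ← this]

end BlkAlgebra

section Units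

lemma isUnit_of_star_unit (d : H →L[ℂ] H) (h1 : IsUnit (star d * d)) (h2 : IsUnit (d * star d)) :
    IsUnit d := by
  obtain ⟨u, hu⟩ := h1
  obtain ⟨v, hv⟩ := h2
  have hl : ((↑u⁻¹ : H →L[ℂ] H) * star d) * d = 1 := by
    rw [mul_assoc, ← hu]; exact u.inv_mul
  have hr : d * (star d * (↑v⁻¹ : H →L[ℂ] H)) = 1 := by
    rw [← mul_assoc, ← hv]; exact v.mul_inv
  have heq : (↑u⁻¹ : H →L[ℂ] H) * star d = star d * (↑v⁻¹ : H →L[ℂ] H) := by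
    calc (↑u⁻¹ : H →L[ℂ] H) * star d
        = ((↑u⁻¹ : H →L[ℂ] H) * star d) * (d * (star d * ↑v⁻¹)) := by rw [hr, mul_one]
      _ = (((↑u⁻¹ : H →L[ℂ] H) * star d) * d) * (star d * ↑v⁻¹) := by
          simp only [mul_assoc]
      _ = star d * ↑v⁻¹ := by rw [hl, one_mul]
  exact ⟨⟨d, (↑u⁻¹ : H →L[ℂ] H) * star d, by rw [heq]; exact hr, hl⟩, rfl⟩

lemma isUnit_one_add_star_mul_self' (b : H →L[ℂ] H) : IsUnit (1 + star b * b) :=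
  CStarAlgebra.isUnit_of_le 1 (le_add_of_nonneg_right (star_mul_self_nonneg b)) isStrictlyPositive_one

lemma isUnit_one_add_mul_self_star' (b : H →L[ℂ] H) : IsUnit (1 + b * star b) := by
  simpa using isUnit_one_add_star_mul_self' (star b)

end Units

section Fredholm

lemma orth_range (A : K →L[ℂ] K) :
    (LinearMap.range (A : K →ₗ[ℂ] K))ᗮ = LinearMap.ker ((adjoint A : K →L[ℂ] K) : K →ₗ[ℂ] K) := by
  ext x
  simp only [Submodule.mem_orthogonal, LinearMap.mem_range, LinearMap.mem_ker, ContinuousLinearMap.coe_coe]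
  constructor
  · intro h
    have h2 : ∀ y : K, inner (𝕜 := ℂ) y (adjoint A x) = 0 := by
      intro y
      rw [adjoint_inner_right]
      exact h (A y) ⟨y, rfl⟩
    have := h2 (adjoint A x)
    rwa [inner_self_eq_zero] at this
  · rintro h u ⟨y, rfl⟩
    rw [← adjoint_inner_right, h, inner_zero_right]

lemma fd_ker_of_unit_mul {U A V : K →L[ℂ] K} (hU : IsUnit U) (hV : IsUnit V)
    (h : FiniteDimensional ℂ (LinearMap.ker (A : K →ₗ[ℂ] K))) :
    FiniteDimensional ℂ (LinearMap.ker ((U * A * V : K →L[ℂ] K) : K →ₗ[ℂ] K)) := by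
  lift U to (K →L[ℂ] K)ˣ using hU
  lift V to (K →L[ℂ] K)ˣ using hV
  set ve := ContinuousLinearEquiv.ofUnit V with hve
  have hker : LinearMap.ker (((U : K →L[ℂ] K) * A * V : K →L[ℂ] K) : K →ₗ[ℂ] K) =
      Submodule.map (ve.symm.toLinearEquiv : K →ₗ[ℂ] K) (LinearMap.ker (A : K →ₗ[ℂ] K)) := by
    rw [show (ve.symm.toLinearEquiv : K →ₗ[ℂ] K) = (ve.toLinearEquiv.symm : K →ₗ[ℂ] K) from rfl,
      ← Submodule.comap_equiv_eq_map_symm]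
    ext x
    simp only [LinearMap.mem_ker, Submodule.mem_comap, ContinuousLinearMap.coe_coe]
    have hco : ((ve.toLinearEquiv : K →ₗ[ℂ] K) x) = (V : K →L[ℂ] K) x := rfl
    have happ : ((U : K →L[ℂ] K) * A * (V : K →L[ℂ] K)) x
        = (U : K →L[ℂ] K) (A ((V : K →L[ℂ] K) x)) := rfl
    rw [happ, hco]
    constructor
    · intro hx
      have h1 : (ContinuousLinearEquiv.ofUnit U) (A ((V : K →L[ℂ] K) x))
          = (ContinuousLinearEquiv.ofUnit U) 0 := by
        rw [map_zero]; exact hx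
      exact (ContinuousLinearEquiv.ofUnit U).injective h1
    · intro hx
      rw [hx, map_zero]
  rw [hker]
  have e2 := Submodule.equivMapOfInjective (ve.symm.toLinearEquiv : K →ₗ[ℂ] K)
    ve.symm.toLinearEquiv.injective (LinearMap.ker (A : K →ₗ[ℂ] K))
  exact Module.Finite.equiv e2

lemma range_unit_mul {U A V : K →L[ℂ] K} (hU : IsUnit U) (hV : IsUnit V) :
    Set.range ((U * A * V : K →L[ℂ] K) : K → K) = (U : K → K) '' Set.range A := by
  lift V to (K →L[ℂ] K)ˣ using hV
  have hVsurj : Function.Surjective (V : K →L[ℂ] K) :=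
    (ContinuousLinearEquiv.ofUnit V).surjective
  have : ((U * A * (V : K →L[ℂ] K)) : K → K) = (U : K → K) ∘ (A : K → K) ∘ (V : K →L[ℂ] K) := rfl
  rw [this, Set.range_comp, Set.range_comp, hVsurj.range_eq, Set.image_univ]

lemma isFredholm_unit_mul {U A V : K →L[ℂ] K} (hU : IsUnit U) (hV : IsUnit V) :
    IsFredholmOp (U * A * V) ↔ IsFredholmOp A := by
  have main : ∀ {U' A' V' : K →L[ℂ] K}, IsUnit U' → IsUnit V' → IsFredholmOp A' →
      IsFredholmOp (U' * A' * V') := by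
    rintro U' A' V' hU' hV' ⟨hk, hr, ho⟩
    refine ⟨fd_ker_of_unit_mul hU' hV' hk, ?_, ?_⟩
    · rw [range_unit_mul hU' hV']
      lift U' to (K →L[ℂ] K)ˣ using hU'
      exact ((ContinuousLinearEquiv.ofUnit U').toHomeomorph.isClosedMap) _ hr
    · rw [orth_range] at ho ⊢
      rw [← star_eq_adjoint, star_mul, star_mul, ← mul_assoc]
      rw [← star_eq_adjoint] at ho
      exact fd_ker_of_unit_mul hV'.star hU'.star ho
  constructor
  · intro h
    lift U to (K →L[ℂ] K)ˣ using hU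
    lift V to (K →L[ℂ] K)ˣ using hV
    have := main (U' := ((U⁻¹ : (K →L[ℂ] K)ˣ) : K →L[ℂ] K))
      (V' := ((V⁻¹ : (K →L[ℂ] K)ˣ) : K →L[ℂ] K)) (Units.isUnit _) (Units.isUnit _) h
    have h1 : ((U⁻¹ : (K →L[ℂ] K)ˣ) : K →L[ℂ] K) * (U : K →L[ℂ] K) = 1 := U.inv_mul
    have h2 : (V : K →L[ℂ] K) * ((V⁻¹ : (K →L[ℂ] K)ˣ) : K →L[ℂ] K) = 1 := V.mul_inv
    have e : ((U⁻¹ : (K →L[ℂ] K)ˣ) : K →L[ℂ] K) * ((U : K →L[ℂ] K) * A * V) *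
        ((V⁻¹ : (K →L[ℂ] K)ˣ) : K →L[ℂ] K) = A := by
      simp only [mul_assoc, h2, mul_one]
      rw [← mul_assoc, h1, one_mul]
    rwa [e] at this
  · exact main hU hV

end Fredholm

/-- Theorem 4.5 of the paper: for a `J`-unitary `T = [[a,b],[c,d]]`
and `z` on the unit circle, `T − z·1` is Fredholm if and only if `V(z̄T) − 1` is
Fredholm, where `V(z̄T) = [[z̄(a*)⁻¹, bd⁻¹],[−d⁻¹c, zd⁻¹]]`. -/
theorem zFredholm_iff_V_fredholm (a b c d : H →L[ℂ] H)
    (hT : IsJUnitary (blk a b c d)) (z : ℂ) (hz : ‖z‖ = 1) :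
    IsFredholmOp (blk a b c d - z • (1 : K →L[ℂ] K)) ↔
    IsFredholmOp (blk ((starRingEnd ℂ z) • Ring.inverse (star a)) (b * Ring.inverse d)
        (-(Ring.inverse d * c)) (z • Ring.inverse d) - (1 : K →L[ℂ] K)) := by
  obtain ⟨hTu, hTJ⟩ := hT
  have hJblk : fundJ = blk (1 : H →L[ℂ] H) 0 0 (-1) := rfl
  have hJJ : (fundJ : K →L[ℂ] K) * fundJ = 1 := by
    rw [hJblk, blk_mul, blk_one]
    norm_num
  -- J-unitarity equations
  have h0 := hTJ
  rw [blk_star, hJblk, blk_mul, blk_mul] at h0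
  obtain ⟨hE1, hE2, hE3, hE4⟩ := blk_inj h0
  have E1 : star a * a = 1 + star c * c := by rw [← hE1]; noncomm_ring
  have E2 : star a * b = star c * d := by
    have h : star a * b - star c * d = 0 := by rw [← hE2]; noncomm_ring
    exact sub_eq_zero.mp h
  have E4 : star d * d = 1 + star b * b := by
    have h : star d * d - star b * b = 1 := by rw [(neg_neg (1 : H →L[ℂ] H)).symm, ← hE4]; noncomm_ring
    rw [← h]; noncomm_ring
  -- T J T* = J
  have hLinv : (fundJ * star (blk a b c d) * fundJ) * blk a b c d = 1 := by
    calc (fundJ * star (blk a b c d) * fundJ) * blk a b c d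
        = fundJ * (star (blk a b c d) * fundJ * blk a b c d) := by simp only [mul_assoc]
      _ = fundJ * fundJ := by rw [hTJ]
      _ = 1 := hJJ
  obtain ⟨u, hu⟩ := hTu
  have hRinv : blk a b c d * (fundJ * star (blk a b c d) * fundJ) = 1 := by
    have hx : fundJ * star (blk a b c d) * fundJ = ((u⁻¹ : (K →L[ℂ] K)ˣ) : K →L[ℂ] K) := by
      calc fundJ * star (blk a b c d) * fundJ
          = (fundJ * star (blk a b c d) * fundJ) * (blk a b c d * ((u⁻¹ : (K →L[ℂ] K)ˣ) : K →L[ℂ] K)) := by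
            rw [← hu, u.mul_inv, mul_one]
        _ = ((fundJ * star (blk a b c d) * fundJ) * blk a b c d) * ((u⁻¹ : (K →L[ℂ] K)ˣ) : K →L[ℂ] K) := by
            simp only [mul_assoc]
        _ = ((u⁻¹ : (K →L[ℂ] K)ˣ) : K →L[ℂ] K) := by rw [hLinv, one_mul]
    rw [hx, ← hu]
    exact u.mul_inv
  have hTJT : blk a b c d * fundJ * star (blk a b c d) = fundJ := by
    have h := congrArg (fun X => X * fundJ) hRinv
    simp only [one_mul] at h
    calc blk a b c d * fundJ * star (blk a b c d)
        = blk a b c d * (fundJ * star (blk a b c d) * fundJ) * fundJ := by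
          simp only [mul_assoc, hJJ, mul_one]
      _ = fundJ := h
  have h1 := hTJT
  rw [blk_star, hJblk, blk_mul, blk_mul] at h1
  obtain ⟨hF1, hF2, hF3, hF4⟩ := blk_inj h1
  have F1 : a * star a = 1 + b * star b := by rw [← hF1]; noncomm_ring
  have F4 : d * star d = 1 + c * star c := by
    have h : d * star d - c * star c = 1 := by rw [(neg_neg (1 : H →L[ℂ] H)).symm, ← hF4]; noncomm_ring
    rw [← h]; noncomm_ring
  -- a and d are invertible
  have hdu : IsUnit d := by
    refine isUnit_of_star_unit d ?_ ?_
    · rw [E4]; exact isUnit_one_add_star_mul_self' b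
    · rw [F4]; exact isUnit_one_add_mul_self_star' c
  have hau : IsUnit a := by
    refine isUnit_of_star_unit a ?_ ?_
    · rw [E1]; exact isUnit_one_add_star_mul_self' c
    · rw [F1]; exact isUnit_one_add_mul_self_star' b
  have hd1 : d * Ring.inverse d = 1 := Ring.mul_inverse_cancel d hdu
  have hd2 : Ring.inverse d * d = 1 := Ring.inverse_mul_cancel d hdu
  -- Schur complement identity
  have hSa : star a * (a - b * (Ring.inverse d * c)) = 1 := by
    have key : star a * (b * (Ring.inverse d * c)) = star c * c := by
      calc star a * (b * (Ring.inverse d * c)) = (star a * b) * Ring.inverse d * c := by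
            noncomm_ring
        _ = star c * (d * Ring.inverse d) * c := by rw [E2]; noncomm_ring
        _ = star c * c := by rw [hd1, mul_one]
    rw [mul_sub, key, E1]
    noncomm_ring
  have hSchur : Ring.inverse (star a) = a - b * (Ring.inverse d * c) := by
    calc Ring.inverse (star a)
        = Ring.inverse (star a) * (star a * (a - b * (Ring.inverse d * c))) := by
          rw [hSa, mul_one]
      _ = (Ring.inverse (star a) * star a) * (a - b * (Ring.inverse d * c)) := by
          rw [mul_assoc]
      _ = a - b * (Ring.inverse d * c) := by
          rw [Ring.inverse_mul_cancel _ hau.star, one_mul]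
  -- scalar facts
  have hzz : (starRingEnd ℂ z) * z = 1 := by
    have hn : Complex.normSq z = 1 := by
      rw [← Complex.sq_norm, hz]; norm_num
    rw [mul_comm, Complex.mul_conj, hn, Complex.ofReal_one]
  have hzz' : z * (starRingEnd ℂ z) = 1 := by rw [mul_comm]; exact hzz
  set di := Ring.inverse d with hdi
  set zb := starRingEnd ℂ z with hzb
  set W : K →L[ℂ] K := blk 1 0 (-(di * c)) (z • di) with hW
  set X : K →L[ℂ] K := blk 1 0 (zb • c) (zb • d) with hX
  have hXW : X * W = 1 := by
    rw [hX, hW, blk_mul, blk_one]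
    congr 1
    · simp
    · simp
    · simp only [smul_mul_assoc, mul_smul_comm, smul_smul, hzz, hzz', one_mul, mul_one, mul_neg,
        neg_mul, zero_mul, mul_zero, add_zero, zero_add, one_smul, ← mul_assoc, hd1, hd2,
        neg_add_cancel, add_neg_cancel]
    · simp only [smul_mul_assoc, mul_smul_comm, smul_smul, hzz, hzz', one_mul, mul_one, mul_neg,
        neg_mul, zero_mul, mul_zero, add_zero, zero_add, one_smul, ← mul_assoc, hd1, hd2,
        neg_add_cancel, add_neg_cancel]
  have hWX : W * X = 1 := by
    rw [hX, hW, blk_mul, blk_one]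
    congr 1
    · simp
    · simp
    · simp only [smul_mul_assoc, mul_smul_comm, smul_smul, hzz, hzz', one_mul, mul_one, mul_neg,
        neg_mul, zero_mul, mul_zero, add_zero, zero_add, one_smul, ← mul_assoc, hd1, hd2,
        neg_add_cancel, add_neg_cancel]
    · simp only [smul_mul_assoc, mul_smul_comm, smul_smul, hzz, hzz', one_mul, mul_one, mul_neg,
        neg_mul, zero_mul, mul_zero, add_zero, zero_add, one_smul, ← mul_assoc, hd1, hd2,
        neg_add_cancel, add_neg_cancel]
  have hWu : IsUnit W := ⟨⟨W, X, hWX, hXW⟩, rfl⟩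
  have hUU : (zb • (fundJ : K →L[ℂ] K)) * (z • fundJ) = 1 := by
    simp only [smul_mul_assoc, mul_smul_comm, smul_smul, hzz, hzz', one_smul, hJJ]
  have hUU' : (z • (fundJ : K →L[ℂ] K)) * (zb • fundJ) = 1 := by
    simp only [smul_mul_assoc, mul_smul_comm, smul_smul, hzz, hzz', one_smul, hJJ]
  have hUu : IsUnit (zb • (fundJ : K →L[ℂ] K)) := ⟨⟨zb • fundJ, z • fundJ, hUU, hUU'⟩, rfl⟩
  have hTz : blk a b c d - z • (1 : K →L[ℂ] K) = blk (a - z • 1) b c (d - z • 1) := by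
    rw [blk_one, blk_smul, blk_sub]
    simp
  have hzJ : zb • fundJ = blk (zb • (1 : H →L[ℂ] H)) 0 0 (-(zb • 1)) := by
    rw [hJblk, blk_smul]
    simp
  have hz0 : z ≠ 0 := by
    intro h; rw [h, norm_zero] at hz; exact one_ne_zero hz.symm
  have hzb' : zb = z⁻¹ := by
    field_simp
    linear_combination hzz
  have hfact : blk (zb • Ring.inverse (star a)) (b * di) (-(di * c)) (z • di) - 1
      = (zb • fundJ) * (blk a b c d - z • (1 : K →L[ℂ] K)) * W := by
    rw [hSchur, hTz, hzJ, hW, blk_mul, blk_mul, blk_one, blk_sub]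
    congr 1 <;>
      simp only [zero_mul, mul_zero, add_zero, zero_add, mul_one, one_mul, sub_zero,
        smul_mul_assoc, mul_smul_comm, mul_neg, neg_mul, neg_neg, sub_mul, mul_sub, smul_sub,
        smul_smul, smul_zero, zero_smul, ← mul_assoc, hd1, hd2, hzz, hzz', one_smul] <;>
      match_scalars <;>
      field_simp [hzb'] <;> simp [hzz']
    
  rw [hfact]
  exact (isFredholm_unit_mul hUu hWu).symm
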